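/- Let m ≥ 1 be an integer, let p ∈ [0,1] and q = 1 − p. Let (ξ_i)_{i≥1} be i.i.d. random variables with P(ξ_i = 1) = p and P(ξ_i = −1) = q, let S_n = ξ_1 + ⋯ + ξ_n, and let T = inf{n ≥ 1 : S_n = −m} (with T = ∞ if the walk never reaches −m). Then for every integer k ≥ 1: if k ≥ m and k + m is even, P[T = k] = (m/k) · C(k, (k−m)/2) · p^{(k−m)/2} q^{(k+m)/2}, and otherwise P[T = k] = 0. -/

import Mathlib

namespace FPaux

def val (b : Bool) : ℤ := if b then 1 else -1

def psum (s : ℕ → Bool) (n : ℕ) : ℤ := ∑ i ∈ Finset.range n, val (s i)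

def IsFP (k m : ℕ) (s : ℕ → Bool) : Prop :=
  psum s k = -(m : ℤ) ∧ ∀ n < k, 1 ≤ n → psum s n ≠ -(m : ℤ)

instance (k m : ℕ) (s : ℕ → Bool) : Decidable (IsFP k m s) := by
  unfold IsFP; infer_instance

def ext (k : ℕ) (f : Fin k → Bool) : ℕ → Bool := fun i => if h : i < k then f ⟨i, h⟩ else true

def N (k m : ℕ) : ℕ :=
  (Finset.univ.filter (fun f : Fin k → Bool => IsFP k m (ext k f))).card

lemma ext_cons_zero (j : ℕ) (b : Bool) (g : Fin j → Bool) :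
    ext (j+1) (Fin.cons b g) 0 = b := by
  simp only [ext, Nat.succ_pos, dif_pos]
  rfl

lemma ext_cons_succ (j : ℕ) (b : Bool) (g : Fin j → Bool) (i : ℕ) :
    ext (j+1) (Fin.cons b g) (i+1) = ext j g i := by
  simp only [ext]
  by_cases h : i < j
  · rw [dif_pos (Nat.succ_lt_succ h), dif_pos h]
    rfl
  · rw [dif_neg (by omega), dif_neg h]

lemma psum_shift (s : ℕ → Bool) (n : ℕ) :
    psum s (n+1) = val (s 0) + psum (fun i => s (i+1)) n := by
  rw [psum, Finset.sum_range_succ', psum]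
  ring

lemma psum_zero (s : ℕ → Bool) : psum s 0 = 0 := by simp [psum]

lemma isFP_cons (j m : ℕ) (hj : 1 ≤ j) (hm : 1 ≤ m) (b : Bool) (g : Fin j → Bool) :
    IsFP (j+1) m (ext (j+1) (Fin.cons b g)) ↔
      (b = true ∧ IsFP j (m+1) (ext j g)) ∨
      (b = false ∧ 2 ≤ m ∧ IsFP j (m-1) (ext j g)) := by
  have hsh : ∀ n, psum (ext (j+1) (Fin.cons b g)) (n+1) = val b + psum (ext j g) n := by
    intro n
    rw [psum_shift]
    congr 1
    · unfold psum
      exact Finset.sum_congr rfl fun i _ => by simp only; rw [ext_cons_succ]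
  have hone : psum (ext (j+1) (Fin.cons b g)) 1 = val b := by rw [hsh 0, psum_zero, add_zero]
  cases b with
  | true =>
    have hval : val true = 1 := rfl
    rw [hval] at hsh hone
    constructor
    · rintro ⟨h1, h2⟩
      refine Or.inl ⟨rfl, ?_, ?_⟩
      · have := hsh j; push_cast at h1 ⊢; omega
      · intro n hn h1n habs
        have := h2 (n+1) (by omega) (by omega)
        rw [hsh n] at this
        push_cast at this habs; omega
    · rintro (⟨-, hA1, hA2⟩ | ⟨hb, -⟩)
      · constructor
        · rw [hsh j]; push_cast at hA1 ⊢; omega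
        · intro n hn h1n habs
          obtain ⟨n', rfl⟩ : ∃ n', n = n' + 1 := ⟨n - 1, by omega⟩
          rw [hsh n'] at habs
          rcases Nat.eq_zero_or_pos n' with h0 | hpos
          · subst h0; rw [psum_zero] at habs; push_cast at habs; omega
          · exact hA2 n' (by omega) hpos (by push_cast at habs ⊢; omega)
      · exact Bool.noConfusion hb
  | false =>
    have hval : val false = -1 := rfl
    rw [hval] at hsh hone
    constructor
    · rintro ⟨h1, h2⟩
      have hm2 : 2 ≤ m := by
        by_contra hc
        have hm1 : m = 1 := by omega
        exact h2 1 (by omega) le_rfl (by rw [hone, hm1]; norm_num)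
      refine Or.inr ⟨rfl, hm2, ?_, ?_⟩
      · rw [hsh j] at h1; push_cast [Nat.cast_sub hm] at h1 ⊢ <;> omega
      · intro n hn h1n habs
        have := h2 (n+1) (by omega) (by omega)
        rw [hsh n] at this
        rw [show ((m - 1 : ℕ) : ℤ) = (m : ℤ) - 1 by push_cast [Nat.cast_sub hm]; ring] at habs
        omega
    · rintro (⟨hb, -⟩ | ⟨-, hm2, hA1, hA2⟩)
      · exact Bool.noConfusion hb
      · rw [show ((m - 1 : ℕ) : ℤ) = (m : ℤ) - 1 by push_cast [Nat.cast_sub hm]; ring] at hA1 hA2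
        constructor
        · rw [hsh j]; omega
        · intro n hn h1n habs
          obtain ⟨n', rfl⟩ : ∃ n', n = n' + 1 := ⟨n - 1, by omega⟩
          rw [hsh n'] at habs
          rcases Nat.eq_zero_or_pos n' with h0 | hpos
          · subst h0; rw [psum_zero] at habs; omega
          · exact hA2 n' (by omega) hpos (by omega)

lemma filter_card_cons (j : ℕ) (b : Bool) (Q : (Fin j → Bool) → Prop) [DecidablePred Q] :
    (Finset.univ.filter (fun f : Fin (j+1) → Bool => f 0 = b ∧ Q (Fin.tail f))).card
      = (Finset.univ.filter Q).card := by
  refine Finset.card_bij' (fun f _ => Fin.tail f) (fun g _ => Fin.cons b g) ?_ ?_ ?_ ?_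
  · intro f hf
    simp only [Finset.mem_filter, Finset.mem_univ, true_and] at hf ⊢
    exact hf.2
  · intro g hg
    simp only [Finset.mem_filter, Finset.mem_univ, true_and] at hg ⊢
    refine ⟨Fin.cons_zero (α := fun _ => Bool) b g, ?_⟩
    rw [Fin.tail_cons]
    exact hg
  · intro f hf
    simp only [Finset.mem_filter, Finset.mem_univ, true_and] at hf
    show Fin.cons b (Fin.tail f) = f
    rw [← hf.1]
    exact Fin.cons_self_tail f
  · intro g _
    exact Fin.tail_cons (α := fun _ => Bool) b g

lemma N_succ (j m : ℕ) (hj : 1 ≤ j) (hm : 1 ≤ m) :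
    N (j+1) m = (if 2 ≤ m then N j (m-1) else 0) + N j (m+1) := by
  classical
  have hsplit : ∀ f : Fin (j+1) → Bool,
      IsFP (j+1) m (ext (j+1) f) ↔
        ((f 0 = true ∧ IsFP j (m+1) (ext j (Fin.tail f))) ∨
         (f 0 = false ∧ (2 ≤ m ∧ IsFP j (m-1) (ext j (Fin.tail f))))) := by
    intro f
    have := isFP_cons j m hj hm (f 0) (Fin.tail f)
    rwa [Fin.cons_self_tail f] at this
  rw [N]
  rw [Finset.filter_congr (fun f _ => by rw [hsplit f])]
  rw [Finset.filter_or, Finset.card_union_of_disjoint]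
  · rw [add_comm]
    congr 1
    · by_cases h2 : 2 ≤ m
      · rw [if_pos h2]
        rw [Finset.filter_congr
          (fun f (_ : f ∈ Finset.univ) => show (f 0 = false ∧ 2 ≤ m ∧ IsFP j (m-1) (ext j (Fin.tail f)))
            ↔ (f 0 = false ∧ IsFP j (m-1) (ext j (Fin.tail f))) by simp [h2])]
        exact filter_card_cons j false (fun g => IsFP j (m-1) (ext j g))
      · rw [if_neg h2]
        rw [Finset.card_eq_zero, Finset.filter_eq_empty_iff]
        intro f _
        rintro ⟨-, hc, -⟩
        exact h2 hc
    · exact filter_card_cons j true (fun g => IsFP j (m+1) (ext j g))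
  · rw [Finset.disjoint_filter]
    rintro f - ⟨h1, -⟩ ⟨h2, -⟩
    rw [h1] at h2
    exact Bool.noConfusion h2

lemma psum_eq (s : ℕ → Bool) (n : ℕ) :
    psum s n = 2 * ((Finset.range n).filter (fun i => s i = true)).card - n := by
  induction n with
  | zero => simp [psum]
  | succ n ih =>
    rw [psum, Finset.sum_range_succ, ← psum, ih, Finset.range_add_one, Finset.filter_insert]
    by_cases h : s n = true <;> simp [h, val, Finset.card_insert_of_notMem, Nat.cast_add] <;> push_cast <;> ring

lemma card_of_isFP {k m : ℕ} {s : ℕ → Bool} (h : IsFP k m s) :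
    m ≤ k ∧ Even (k + m) ∧
      ((Finset.range k).filter (fun i => s i = true)).card = (k - m) / 2 := by
  have h1 := h.1
  rw [psum_eq] at h1
  set t := ((Finset.range k).filter (fun i => s i = true)).card with ht
  have htk : t ≤ k := by
    calc t ≤ (Finset.range k).card := Finset.card_filter_le _ _
    _ = k := Finset.card_range k
  have : 2 * (t : ℤ) - k = -(m : ℤ) := h1
  have h2 : 2 * t + m = k := by omega
  refine ⟨by omega, ⟨t + m, by omega⟩, by omega⟩

lemma N_eq_zero {k m : ℕ} (h : ¬ (m ≤ k ∧ Even (k + m))) : N k m = 0 := by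
  rw [N, Finset.card_eq_zero, Finset.filter_eq_empty_iff]
  intro f _ hf
  obtain ⟨h1, h2, _⟩ := card_of_isFP hf
  exact h ⟨h1, h2⟩

lemma psum_neg_le (s : ℕ → Bool) (n : ℕ) : -(n : ℤ) ≤ psum s n := by
  have := psum_eq s n
  have : (0:ℤ) ≤ ((Finset.range n).filter (fun i => s i = true)).card := by positivity
  omega

-- all-false characterization
lemma N_self (k : ℕ) (hk : 1 ≤ k) : N k k = 1 := by
  rw [N, Finset.card_eq_one]
  refine ⟨fun _ => false, ?_⟩
  rw [Finset.eq_singleton_iff_unique_mem]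
  constructor
  · simp only [Finset.mem_filter, Finset.mem_univ, true_and]
    constructor
    · have key : ∀ n, n ≤ k → psum (ext k fun _ => false) n = -(n : ℤ) := by
        intro n hn
        rw [psum_eq]
        have : (Finset.range n).filter (fun i => ext k (fun _ => false) i = true) = ∅ := by
          rw [Finset.filter_eq_empty_iff]
          intro i hi
          have : i < k := lt_of_lt_of_le (Finset.mem_range.mp hi) hn
          simp [ext, this]
        rw [this]
        simp
      exact key k le_rfl
    · intro n hn h1 habs
      have := psum_neg_le (ext k fun _ => false) n
      rw [habs] at this
      omega
  · intro f hf
    simp only [Finset.mem_filter, Finset.mem_univ, true_and] at hf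
    obtain ⟨-, -, hcard⟩ := card_of_isFP hf
    simp only [Nat.sub_self, Nat.zero_div, Finset.card_eq_zero, Finset.filter_eq_empty_iff] at hcard
    funext i
    have := hcard (Finset.mem_range.mpr i.2)
    simp only [ext, i.2, dif_pos] at this
    simpa using this


lemma choose_id (k a : ℕ) (hk : 1 ≤ k) (ha : a < k) :
    (k - a) * Nat.choose k a = k * Nat.choose (k-1) a := by
  obtain ⟨j, rfl⟩ : ∃ j, k = j + 1 := ⟨k - 1, by omega⟩
  have h1 := Nat.add_one_mul_choose_eq j a
  have h2 := Nat.choose_succ_right_eq (j+1) a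
  simp only [Nat.add_sub_cancel]
  rw [mul_comm]
  omega

lemma N_closed : ∀ k m : ℕ, 1 ≤ m → m ≤ k → Even (k + m) →
    N k m + Nat.choose k ((k - m) / 2) = 2 * Nat.choose (k - 1) ((k - m) / 2) := by
  intro k
  induction k using Nat.strong_induction_on with
  | _ k ih =>
    intro m hm hmk hev
    by_cases hkm : m = k
    · subst hkm
      rw [N_self m hm]
      simp
    · -- m < k, and by parity m + 2 ≤ k
      obtain ⟨c, hc⟩ := hev
      obtain ⟨a, ha⟩ : ∃ a, k = m + 2 * a := ⟨c - m, by omega⟩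
      have ha1 : 1 ≤ a := by omega
      obtain ⟨j, rfl⟩ : ∃ j, k = j + 1 := ⟨k - 1, by omega⟩
      have hj : 1 ≤ j := by omega
      have hdiv : (j + 1 - m) / 2 = a := by omega
      rw [N_succ j m hj hm, hdiv, Nat.add_sub_cancel]
      have IH1 := ih j (by omega) (m+1) (by omega) (by omega) ⟨c, by omega⟩
      have hd1 : (j - (m+1)) / 2 = a - 1 := by omega
      rw [hd1] at IH1
      have hp1 : Nat.choose (j+1) a = Nat.choose j (a-1) + Nat.choose j a := by
        have := Nat.choose_succ_succ j (a-1)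
        simp only [Nat.succ_eq_add_one] at this
        rw [show a - 1 + 1 = a by omega] at this
        omega
      have hp2 : Nat.choose j a = Nat.choose (j-1) (a-1) + Nat.choose (j-1) a := by
        have := Nat.choose_succ_succ (j-1) (a-1)
        simp only [Nat.succ_eq_add_one] at this
        rw [show a - 1 + 1 = a by omega, show j - 1 + 1 = j by omega] at this
        omega
      by_cases h2 : 2 ≤ m
      · rw [if_pos h2]
        have IH2 := ih j (by omega) (m-1) (by omega) (by omega) ⟨c - 1, by omega⟩
        have hd2 : (j - (m-1)) / 2 = a := by omega
        rw [hd2] at IH2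
        omega
      · rw [if_neg h2]
        have hm1 : m = 1 := by omega
        subst hm1
        -- j = 2a, need choose (j-1) (a-1) = choose (j-1) a
        have hsym : Nat.choose (j-1) (a-1) = Nat.choose (j-1) a := by
          have := Nat.choose_symm (n := j - 1) (k := a) (by omega)
          rw [show j - 1 - a = a - 1 by omega] at this
          omega
        omega

lemma N_mul (k m : ℕ) (hm : 1 ≤ m) (hmk : m ≤ k) (hev : Even (k + m)) :
    k * N k m = m * Nat.choose k ((k - m) / 2) := by
  obtain ⟨c, hc⟩ := hev
  obtain ⟨a, ha⟩ : ∃ a, k = m + 2 * a := ⟨c - m, by omega⟩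
  have hdiv : (k - m) / 2 = a := by omega
  rw [hdiv]
  have hcl := N_closed k m hm hmk ⟨c, by omega⟩
  rw [hdiv] at hcl
  have hid := choose_id k a (by omega) (by omega)
  have key : k * N k m + k * Nat.choose k a
      = m * Nat.choose k a + k * Nat.choose k a := by
    calc k * N k m + k * Nat.choose k a
        = k * (N k m + Nat.choose k a) := by ring
      _ = k * (2 * Nat.choose (k-1) a) := by rw [hcl]
      _ = 2 * (k * Nat.choose (k-1) a) := by ring
      _ = 2 * ((k - a) * Nat.choose k a) := by rw [hid]
      _ = 2 * ((m + a) * Nat.choose k a) := by rw [show k - a = m + a by omega]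
      _ = m * Nat.choose k a + k * Nat.choose k a := by
          rw [ha]; ring
  omega

end FPaux
open MeasureTheory ProbabilityTheory

namespace FPaux

def valR (b : Bool) : ℝ := if b then 1 else -1

lemma valR_eq_cast (b : Bool) : valR b = ((val b : ℤ) : ℝ) := by
  cases b <;> simp [valR, val]

lemma valR_inj : Function.Injective valR := by
  intro a b hab
  cases a <;> cases b <;> simp_all [valR] <;> norm_num at hab

section Meas

variable {Ω : Type*} [MeasurableSpace Ω] (μ : Measure Ω) [IsProbabilityMeasure μ]
  (ξ : ℕ → Ω → ℝ)

def cyl (k : ℕ) (f : Fin k → Bool) : Set Ω :=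
  ⋂ i ∈ Finset.range k, ξ i ⁻¹' {valR (ext k f i)}

lemma cyl_meas (hξmeas : ∀ i, Measurable (ξ i)) (k : ℕ) (f : Fin k → Bool) :
    MeasurableSet (cyl ξ k f) :=
  Finset.measurableSet_biInter _ fun i _ => (hξmeas i) (measurableSet_singleton _)

variable {p q : ℝ}

lemma point_meas (hξmeas : ∀ i, Measurable (ξ i))
    (hξdist : ∀ i, Measure.map (ξ i) μ =
      ENNReal.ofReal p • Measure.dirac (1 : ℝ) + ENNReal.ofReal q • Measure.dirac (-1 : ℝ))
    (i : ℕ) (b : Bool) :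
    μ (ξ i ⁻¹' {valR b}) = if b then ENNReal.ofReal p else ENNReal.ofReal q := by
  rw [← Measure.map_apply (hξmeas i) (measurableSet_singleton _), hξdist i]
  cases b <;>
    simp [valR, Measure.dirac_apply' _ (measurableSet_singleton _), Set.indicator_apply] <;>
    norm_num

lemma cyl_measure (hξmeas : ∀ i, Measurable (ξ i))
    (hindep : iIndepFun ξ μ)
    (hξdist : ∀ i, Measure.map (ξ i) μ =
      ENNReal.ofReal p • Measure.dirac (1 : ℝ) + ENNReal.ofReal q • Measure.dirac (-1 : ℝ))
    (k : ℕ) (f : Fin k → Bool) :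
    μ (cyl ξ k f) = ∏ i ∈ Finset.range k,
      (if ext k f i then ENNReal.ofReal p else ENNReal.ofReal q) := by
  rw [cyl, hindep.measure_inter_preimage_eq_mul (Finset.range k)
    (sets := fun i => {valR (ext k f i)}) (fun i _ => measurableSet_singleton _)]
  exact Finset.prod_congr rfl fun i _ => point_meas μ ξ hξmeas hξdist i _

lemma range_meas (hp0 : 0 ≤ p) (hq0 : 0 ≤ q) (hpq : p + q = 1)
    (hξmeas : ∀ i, Measurable (ξ i))
    (hξdist : ∀ i, Measure.map (ξ i) μ =
      ENNReal.ofReal p • Measure.dirac (1 : ℝ) + ENNReal.ofReal q • Measure.dirac (-1 : ℝ))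
    (i : ℕ) : μ (ξ i ⁻¹' {(1:ℝ), -1}) = 1 := by
  have hms : MeasurableSet ({(1:ℝ), -1}) :=
    ((Set.finite_singleton (-1:ℝ)).insert 1).measurableSet
  rw [← Measure.map_apply (hξmeas i) hms, hξdist i]
  have h1 : (1:ℝ) ∈ ({(1:ℝ), -1} : Set ℝ) := by norm_num
  have h2 : (-1:ℝ) ∈ ({(1:ℝ), -1} : Set ℝ) := by norm_num
  simp only [Measure.add_apply, Measure.smul_apply, smul_eq_mul,
    Measure.dirac_apply' _ hms, Set.indicator_apply, h1, h2, if_pos, Pi.one_apply, mul_one]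
  rw [← ENNReal.ofReal_add hp0 hq0, hpq]
  simp

end Meas

end FPaux

/-- **First passage time distribution.** Let `m ≥ 1`, `p ∈ [0,1]`, `q = 1-p`, `(ξ i)` i.i.d.
with `P(ξ i = 1) = p`, `P(ξ i = -1) = q`, `S n = ξ 0 + ⋯ + ξ (n-1)` and
`T = inf {n ≥ 1 : S n = -m}`.  Then for every `k ≥ 1`: if `k ≥ m` and `k + m` is even,
`P[T = k] = (m/k) C(k, (k-m)/2) p^{(k-m)/2} q^{(k+m)/2}`, and otherwise `P[T = k] = 0`. -/
theorem first_passage_time_distribution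
    {Ω : Type*} [MeasurableSpace Ω] (μ : Measure Ω) [IsProbabilityMeasure μ]
    (m : ℕ) (hm : 1 ≤ m)
    (p : ℝ) (hp0 : 0 ≤ p) (hp1 : p ≤ 1) (q : ℝ) (hq : q = 1 - p)
    (ξ : ℕ → Ω → ℝ)
    (hξmeas : ∀ i, Measurable (ξ i))
    (hindep : iIndepFun ξ μ)
    (hξdist : ∀ i, Measure.map (ξ i) μ =
      ENNReal.ofReal p • Measure.dirac (1 : ℝ) + ENNReal.ofReal q • Measure.dirac (-1 : ℝ))
    (S : ℕ → Ω → ℝ) (hS : ∀ n ω, S n ω = ∑ i ∈ Finset.range n, ξ i ω)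
    (T : Ω → ℕ) (hT : ∀ ω, T ω = sInf {n : ℕ | 1 ≤ n ∧ S n ω = -(m : ℝ)})
    (k : ℕ) (hk : 1 ≤ k) :
    (m ≤ k ∧ Even (k + m) →
      μ {ω | T ω = k} =
        ENNReal.ofReal (((m : ℝ) / (k : ℝ)) * (Nat.choose k ((k - m) / 2) : ℝ) *
          p ^ ((k - m) / 2) * q ^ ((k + m) / 2))) ∧
    (¬ (m ≤ k ∧ Even (k + m)) → μ {ω | T ω = k} = 0) := by
  classical
  have hq0 : 0 ≤ q := by rw [hq]; linarith
  have hpq : p + q = 1 := by rw [hq]; ring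
  -- characterization of T = k
  have hTk : ∀ ω, T ω = k ↔ (S k ω = -(m:ℝ) ∧ ∀ n < k, 1 ≤ n → S n ω ≠ -(m:ℝ)) := by
    intro ω
    rw [hT]
    constructor
    · intro h
      have hne : {n : ℕ | 1 ≤ n ∧ S n ω = -(m:ℝ)}.Nonempty := by
        by_contra hc
        rw [Set.not_nonempty_iff_eq_empty] at hc
        rw [hc, Nat.sInf_empty] at h
        omega
      have hmem := Nat.sInf_mem hne
      rw [h] at hmem
      refine ⟨hmem.2, fun n hn h1 habs => ?_⟩
      have := Nat.sInf_le (show n ∈ {n : ℕ | 1 ≤ n ∧ S n ω = -(m:ℝ)} from ⟨h1, habs⟩)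
      omega
    · rintro ⟨h1, h2⟩
      have hmem : k ∈ {n : ℕ | 1 ≤ n ∧ S n ω = -(m:ℝ)} := ⟨hk, h1⟩
      refine le_antisymm (Nat.sInf_le hmem) ?_
      by_contra hc
      push_neg at hc
      have hin := Nat.sInf_mem (⟨k, hmem⟩ : {n : ℕ | 1 ≤ n ∧ S n ω = -(m:ℝ)}.Nonempty)
      exact h2 _ hc hin.1 hin.2
  set Good : Finset (Fin k → Bool) :=
    Finset.univ.filter (fun f => FPaux.IsFP k m (FPaux.ext k f)) with hGood
  have hGoodCard : Good.card = FPaux.N k m := by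
    rw [hGood, FPaux.N]
  -- partial sums bridge
  have hSpsum : ∀ (f : Fin k → Bool) (ω : Ω),
      (∀ i ∈ Finset.range k, ξ i ω = FPaux.valR (FPaux.ext k f i)) →
      ∀ n, n ≤ k → S n ω = ((FPaux.psum (FPaux.ext k f) n : ℤ) : ℝ) := by
    intro f ω hω n hn
    rw [hS, FPaux.psum]
    push_cast
    refine Finset.sum_congr rfl fun i hi => ?_
    rw [hω i (Finset.mem_range.mpr (lt_of_lt_of_le (Finset.mem_range.mp hi) hn)),
      FPaux.valR_eq_cast]
  -- decomposition of the event
  have hdecomp : {ω | T ω = k} ∩ (⋂ i ∈ Finset.range k, ξ i ⁻¹' {(1:ℝ), -1})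
      = ⋃ f ∈ Good, FPaux.cyl ξ k f := by
    ext ω
    simp only [Set.mem_inter_iff, Set.mem_setOf_eq, Set.mem_iInter, Set.mem_iUnion,
      Set.mem_preimage, Set.mem_insert_iff, Set.mem_singleton_iff, FPaux.cyl, hGood,
      Finset.mem_filter, Finset.mem_univ, true_and]
    constructor
    · rintro ⟨hTω, hB⟩
      set f : Fin k → Bool := fun i => if ξ (i:ℕ) ω = 1 then true else false with hf
      have hpt : ∀ i ∈ Finset.range k, ξ i ω = FPaux.valR (FPaux.ext k f i) := by
        intro i hi
        have hik := Finset.mem_range.mp hi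
        have hext : FPaux.ext k f i = f ⟨i, hik⟩ := by rw [FPaux.ext, dif_pos hik]
        rcases hB i hi with h1 | h2
        · have hft : f ⟨i, hik⟩ = true := by simp [hf, h1]
          rw [hext, hft, h1]; rfl
        · have hne : ¬ (ξ i ω = 1) := by rw [h2]; norm_num
          have hff : f ⟨i, hik⟩ = false := by simp [hf, hne]
          rw [hext, hff, h2]; rfl
      rw [hTk ω] at hTω
      refine ⟨f, ⟨?_, ?_⟩, hpt⟩
      · have := hSpsum f ω hpt k le_rfl
        rw [hTω.1] at this
        exact_mod_cast this.symm
      · intro n hn h1n habs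
        refine hTω.2 n hn h1n ?_
        rw [hSpsum f ω hpt n (le_of_lt hn), habs]
        push_cast
        ring
    · rintro ⟨f, hfFP, hcyl⟩
      have hmem : ∀ i ∈ Finset.range k, ξ i ω = 1 ∨ ξ i ω = -1 := by
        intro i hi
        rw [hcyl i hi]
        cases hb : FPaux.ext k f i <;> simp [FPaux.valR, hb]
      refine ⟨?_, hmem⟩
      rw [hTk ω]
      constructor
      · rw [hSpsum f ω hcyl k le_rfl, hfFP.1]
        push_cast
        ring
      · intro n hn h1n habs
        refine hfFP.2 n hn h1n ?_
        rw [hSpsum f ω hcyl n (le_of_lt hn)] at habs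
        exact_mod_cast habs
  -- null complement
  have hBc : μ (⋂ i ∈ Finset.range k, ξ i ⁻¹' {(1:ℝ), -1})ᶜ = 0 := by
    rw [Set.compl_iInter₂]
    refine (measure_biUnion_null_iff (Finset.range k).countable_toSet).mpr fun i _ => ?_
    have h1 := FPaux.range_meas μ ξ hp0 hq0 hpq hξmeas hξdist i
    have hms : MeasurableSet (ξ i ⁻¹' {(1:ℝ), -1}) :=
      (hξmeas i) (((Set.finite_singleton (-1:ℝ)).insert 1).measurableSet)
    rw [measure_compl hms (measure_ne_top μ _), h1, measure_univ, tsub_self]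
  -- main sum formula
  have hmeasT : μ {ω | T ω = k} = ∑ f ∈ Good, μ (FPaux.cyl ξ k f) := by
    rw [← measure_inter_conull hBc, hdecomp]
    refine measure_biUnion_finset ?_ (fun f _ => FPaux.cyl_meas ξ hξmeas k f)
    intro f _ g _ hfg
    refine Set.disjoint_left.mpr fun ω hfω hgω => hfg ?_
    funext i
    have h1 : ξ (i:ℕ) ω = FPaux.valR (FPaux.ext k f i) := by
      have := Set.mem_iInter₂.mp hfω i (Finset.mem_range.mpr i.2)
      simpa using this
    have h2 : ξ (i:ℕ) ω = FPaux.valR (FPaux.ext k g i) := by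
      have := Set.mem_iInter₂.mp hgω i (Finset.mem_range.mpr i.2)
      simpa using this
    have h3 : FPaux.ext k f i = FPaux.ext k g i := FPaux.valR_inj (h1 ▸ h2)
    rw [FPaux.ext, FPaux.ext, dif_pos i.2, dif_pos i.2] at h3
    simpa using h3
  -- weights
  have hweight : ∀ f ∈ Good, μ (FPaux.cyl ξ k f) =
      ENNReal.ofReal p ^ ((k-m)/2) * ENNReal.ofReal q ^ (k - (k-m)/2) := by
    intro f hf
    rw [hGood, Finset.mem_filter] at hf
    obtain ⟨hmk, hev, hcard⟩ := FPaux.card_of_isFP hf.2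
    rw [FPaux.cyl_measure μ ξ hξmeas hindep hξdist k f, Finset.prod_ite,
      Finset.prod_const, Finset.prod_const, hcard]
    congr 2
    have := Finset.card_filter_add_card_filter_not
      (s := Finset.range k) (p := fun i => FPaux.ext k f i = true)
    rw [hcard] at this
    simp only [Finset.card_range] at this
    omega
  by_cases hcase : m ≤ k ∧ Even (k + m)
  · refine ⟨fun _ => ?_, fun h => absurd hcase h⟩
    obtain ⟨hmk, hev⟩ := hcase
    have hNk := FPaux.N_mul k m hm hmk hev
    obtain ⟨c, hc⟩ := hev
    rw [hmeasT, Finset.sum_congr rfl hweight, Finset.sum_const, hGoodCard, nsmul_eq_mul]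
    have hb : k - (k-m)/2 = (k+m)/2 := by omega
    rw [hb]
    have hcast : ((FPaux.N k m : ENNReal)) = ENNReal.ofReal (FPaux.N k m : ℝ) := by
      rw [ENNReal.ofReal_natCast]
    rw [hcast, ← ENNReal.ofReal_pow hp0, ← ENNReal.ofReal_pow hq0,
      ← ENNReal.ofReal_mul (by positivity), ← ENNReal.ofReal_mul (by positivity)]
    congr 1
    have hkR : (k:ℝ) ≠ 0 := by positivity
    have hNkR : (k:ℝ) * (FPaux.N k m : ℝ) = (m:ℝ) * (Nat.choose k ((k-m)/2) : ℝ) := by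
      exact_mod_cast hNk
    have hNval : (FPaux.N k m : ℝ) = (m:ℝ) / (k:ℝ) * (Nat.choose k ((k-m)/2) : ℝ) := by
      field_simp
      linarith
    rw [hNval]
    ring
  · refine ⟨fun h => absurd h hcase, fun _ => ?_⟩
    rw [hmeasT]
    have hempty : Good = ∅ := by
      rw [hGood, Finset.eq_empty_iff_forall_notMem]
      intro f hf
      rw [Finset.mem_filter] at hf
      obtain ⟨h1, h2, _⟩ := FPaux.card_of_isFP hf.2
      exact hcase ⟨h1, h2⟩
    rw [hempty]
    simp
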